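/- (Main theorem, constant step-size.) Let (α_k)_{k≥0} and (β_k)_{k≥0} be real sequences in (0,1) such that there exists α > 0 with α ≤ β_k < 1 − α_k for all k, lim_{k→∞} α_k = 0 and ∑_{k=1}^∞ α_k = ∞. Then the sequence (x^k)_{k≥0} generated by the FBF algorithm with constant step-size γ ∈ (0, 1/L) converges strongly (in norm) to the point p ∈ X* characterized as p = argmin{‖z‖ : z ∈ X*}, i.e. the minimal-norm solution of VI(X,F). -/

import Mathlib

open scoped RealInnerProductSpace
open Filter

section FBFAux

variable {H : Type*} [NormedAddCommGroup H] [InnerProductSpace ℝ H] [CompleteSpace H]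

/-- Bounded sequences in a Hilbert space have weakly convergent subsequences. -/
lemma fbf_exists_weak_subseq (u : ℕ → H) (B : ℝ) (hB : ∀ k, ‖u k‖ ≤ B) :
    ∃ w : H, ∃ θ : ℕ → ℕ, StrictMono θ ∧
      ∀ v : H, Tendsto (fun j => ⟪u (θ j), v⟫) atTop (nhds ⟪w, v⟫) := by
  have hB0 : 0 ≤ B := le_trans (norm_nonneg _) (hB 0)
  set M : Submodule ℝ H := (Submodule.span ℝ (Set.range u)).topologicalClosure with hM
  have huM : ∀ k, u k ∈ M := fun k =>
    Submodule.le_topologicalClosure _ (Submodule.subset_span (Set.mem_range_self k))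
  have hMclosed : IsClosed (M : Set H) := Submodule.isClosed_topologicalClosure _
  haveI : CompleteSpace M := hMclosed.completeSpace_coe
  -- a countable dense family in M
  have hsep : TopologicalSpace.IsSeparable (M : Set H) := by
    have : TopologicalSpace.IsSeparable
        ((Submodule.span ℝ (Set.range u) : Submodule ℝ H) : Set H) :=
      (Set.countable_range u).isSeparable.span
    simpa [hM, Submodule.topologicalClosure_coe] using this.closure
  obtain ⟨D, hDcount, hDsub⟩ := hsep
  have hD'count : (D ∪ {0} : Set H).Countable := hDcount.union (Set.countable_singleton 0)
  obtain ⟨d, hd⟩ := (Set.Countable.exists_eq_range hD'count ⟨0, Or.inr rfl⟩)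
  have hdense : ∀ v ∈ M, ∀ ε > 0, ∃ n : ℕ, ‖v - d n‖ < ε := by
    intro v hv ε hε
    have : v ∈ closure D := hDsub hv
    obtain ⟨y, hyD, hy⟩ := Metric.mem_closure_iff.1 this ε hε
    have : y ∈ Set.range d := by rw [← hd]; exact Or.inl hyD
    obtain ⟨n, rfl⟩ := this
    exact ⟨n, by rwa [← dist_eq_norm]⟩
  -- extract a subsequence converging against each `d n`
  set K : Set (ℕ → ℝ) := Set.univ.pi fun n => Set.Icc (-(B * ‖d n‖)) (B * ‖d n‖) with hK
  have hKcomp : IsCompact K := isCompact_univ_pi fun n => isCompact_Icc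
  have hTmem : ∀ k, (fun n => ⟪u k, d n⟫) ∈ K := by
    intro k
    refine Set.mem_univ_pi.2 fun n => ?_
    have h1 : |⟪u k, d n⟫| ≤ ‖u k‖ * ‖d n‖ := abs_real_inner_le_norm _ _
    have h2 : ‖u k‖ * ‖d n‖ ≤ B * ‖d n‖ :=
      mul_le_mul_of_nonneg_right (hB k) (norm_nonneg _)
    constructor <;> [linarith [neg_abs_le ⟪u k, d n⟫]; linarith [le_abs_self ⟪u k, d n⟫]]
  obtain ⟨ℓ, -, θ, hθmono, hθ⟩ := hKcomp.tendsto_subseq hTmem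
  have hcoord : ∀ n, Tendsto (fun j => ⟪u (θ j), d n⟫) atTop (nhds (ℓ n)) := by
    intro n
    exact (tendsto_pi_nhds.1 hθ) n
  -- Cauchy against every `v ∈ M`
  have hCauchy : ∀ v ∈ M, CauchySeq fun j => ⟪u (θ j), v⟫ := by
    intro v hv
    rw [Metric.cauchySeq_iff]
    intro ε hε
    obtain ⟨n, hn⟩ := hdense v hv (ε / (4 * (B + 1))) (by positivity)
    have hc : CauchySeq fun j => ⟪u (θ j), d n⟫ := (hcoord n).cauchySeq
    rw [Metric.cauchySeq_iff] at hc
    obtain ⟨N, hN⟩ := hc (ε / 2) (by linarith)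
    refine ⟨N, fun i hi j hj => ?_⟩
    have key : ∀ k, |⟪u (θ k), v⟫ - ⟪u (θ k), d n⟫| ≤ ε / 4 := by
      intro k
      have : ⟪u (θ k), v⟫ - ⟪u (θ k), d n⟫ = ⟪u (θ k), v - d n⟫ := by
        rw [inner_sub_right]
      rw [this]
      have h1 : |⟪u (θ k), v - d n⟫| ≤ ‖u (θ k)‖ * ‖v - d n‖ := abs_real_inner_le_norm _ _
      have h2 : ‖u (θ k)‖ * ‖v - d n‖ ≤ B * (ε / (4 * (B + 1))) := by
        exact mul_le_mul (hB (θ k)) hn.le (norm_nonneg _) hB0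
      have h3 : B * (ε / (4 * (B + 1))) ≤ ε / 4 := by
        rw [mul_comm, div_mul_eq_mul_div,
          div_le_div_iff₀ (by positivity) (by norm_num : (0:ℝ) < 4)]
        nlinarith [hε.le]
      linarith
    have := hN i hi j hj
    rw [Real.dist_eq] at this ⊢
    have k1 := key i; have k2 := key j
    have : |⟪u (θ i), v⟫ - ⟪u (θ j), v⟫| ≤
        |⟪u (θ i), v⟫ - ⟪u (θ i), d n⟫| + |⟪u (θ i), d n⟫ - ⟪u (θ j), d n⟫|
          + |⟪u (θ j), d n⟫ - ⟪u (θ j), v⟫| := by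
      have := abs_sub_le (⟪u (θ i), v⟫) (⟪u (θ i), d n⟫) (⟪u (θ j), v⟫)
      have := abs_sub_le (⟪u (θ i), d n⟫) (⟪u (θ j), d n⟫) (⟪u (θ j), v⟫)
      linarith [abs_sub_le (⟪u (θ i), v⟫) (⟪u (θ i), d n⟫) (⟪u (θ j), v⟫),
        abs_sub_le (⟪u (θ i), d n⟫) (⟪u (θ j), d n⟫) (⟪u (θ j), v⟫)]
    have k3 : |⟪u (θ j), d n⟫ - ⟪u (θ j), v⟫| ≤ ε / 4 := by
      rw [abs_sub_comm]; exact key j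
    linarith [hN i hi j hj, key i]
  -- convergence against every `v : H`
  have hconv : ∀ v : H, ∃ l : ℝ, Tendsto (fun j => ⟪u (θ j), v⟫) atTop (nhds l) := by
    intro v
    have hPv : (M.orthogonalProjectionOnto v : H) ∈ M := (M.orthogonalProjectionOnto v).2
    have heq : ∀ k, ⟪u k, v⟫ = ⟪u k, (M.orthogonalProjectionOnto v : H)⟫ := by
      intro k
      have horth : v - (M.orthogonalProjectionOnto v : H) ∈ Mᗮ :=
        M.sub_starProjection_mem_orthogonal v
      have : ⟪u k, v - (M.orthogonalProjectionOnto v : H)⟫ = 0 :=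
        (Submodule.mem_orthogonal M _).1 horth (u k) (huM k)
      rw [inner_sub_right] at this
      linarith
    obtain ⟨l, hl⟩ := cauchySeq_tendsto_of_complete (hCauchy _ hPv)
    exact ⟨l, by simpa only [heq] using hl⟩
  choose g hg using hconv
  -- the limit functional is linear and bounded
  have hadd : ∀ v v', g (v + v') = g v + g v' := by
    intro v v'
    refine tendsto_nhds_unique ?_ ((hg v).add (hg v'))
    simpa only [inner_add_right] using hg (v + v')
  have hsmul : ∀ (c : ℝ) (v : H), g (c • v) = c * g v := by
    intro c v
    refine tendsto_nhds_unique ?_ ((hg v).const_mul c)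
    simpa only [real_inner_smul_right] using hg (c • v)
  have hbound : ∀ v, |g v| ≤ B * ‖v‖ := by
    intro v
    refine le_of_tendsto' (hg v).abs fun j => ?_
    calc |⟪u (θ j), v⟫| ≤ ‖u (θ j)‖ * ‖v‖ := abs_real_inner_le_norm _ _
      _ ≤ B * ‖v‖ := mul_le_mul_of_nonneg_right (hB _) (norm_nonneg _)
  let f : H →L[ℝ] ℝ := LinearMap.mkContinuous
    { toFun := g, map_add' := hadd, map_smul' := hsmul } B
    (fun v => by simpa [Real.norm_eq_abs] using hbound v)
  refine ⟨(InnerProductSpace.toDual ℝ H).symm f, θ, hθmono, fun v => ?_⟩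
  have : ⟪(InnerProductSpace.toDual ℝ H).symm f, v⟫ = f v :=
    InnerProductSpace.toDual_symm_apply
  rw [this]
  exact hg v

/-- Closed convex sets are weakly sequentially closed. -/
lemma fbf_mem_of_weak_limit (X : Set H) (hXcl : IsClosed X) (hXconv : Convex ℝ X)
    (u : ℕ → H) (hu : ∀ j, u j ∈ X) (w : H)
    (hw : ∀ v : H, Tendsto (fun j => ⟪u j, v⟫) atTop (nhds ⟪w, v⟫)) : w ∈ X := by
  by_contra hnot
  obtain ⟨f, s, hfs, hsw⟩ := geometric_hahn_banach_closed_point hXconv hXcl hnot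
  set vf := (InnerProductSpace.toDual ℝ H).symm f with hvfdef
  have hvf : ∀ a : H, f a = ⟪vf, a⟫ := fun a => (InnerProductSpace.toDual_symm_apply).symm
  have htend : Tendsto (fun j => f (u j)) atTop (nhds (f w)) := by
    have h := hw vf
    have e1 : ∀ j, f (u j) = ⟪u j, vf⟫ := fun j => (hvf (u j)).trans (real_inner_comm _ _)
    have e2 : f w = ⟪w, vf⟫ := (hvf w).trans (real_inner_comm _ _)
    rw [e2]; simpa only [e1] using h
  have : f w ≤ s := le_of_tendsto htend (Eventually.of_forall fun j => (hfs _ (hu j)).le)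
  linarith

/-- Xu's lemma: the standard recursion for strong convergence proofs. -/
lemma fbf_xu (a b α : ℕ → ℝ) (ha : ∀ k, 0 ≤ a k)
    (hα : ∀ k, 0 < α k) (hα1 : ∀ k, α k ≤ 1)
    (hrec : ∀ k, a (k + 1) ≤ (1 - α k) * a k + α k * b k)
    (hαsum : Tendsto (fun N => ∑ k ∈ Finset.range N, α k) atTop atTop)
    (hb : ∀ ε > 0, ∀ᶠ k in atTop, b k ≤ ε) :
    Tendsto a atTop (nhds 0) := by
  rw [Metric.tendsto_atTop]
  intro ε hε
  obtain ⟨N, hN⟩ := (hb (ε / 3) (by linarith)).exists_forall_of_atTop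
  set P : ℕ → ℝ := fun j => ∏ i ∈ Finset.range j, (1 - α (N + i)) with hP
  have hP0 : ∀ j, 0 ≤ P j := by
    intro j
    exact Finset.prod_nonneg fun i _ => by linarith [hα1 (N + i)]
  have hPkey : ∀ j, a (N + j) ≤ ε / 3 + P j * a N := by
    intro j
    induction j with
    | zero => simp [hP]; linarith [ha N, hε]
    | succ j ih =>
      have h1 := hrec (N + j)
      have h2 : b (N + j) ≤ ε / 3 := hN _ (Nat.le_add_right _ _)
      have h3 : 0 ≤ 1 - α (N + j) := by linarith [hα1 (N + j)]
      have h4 : P (j + 1) = (1 - α (N + j)) * P j := by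
        rw [hP]; simp [Finset.prod_range_succ, mul_comm]
      have : a (N + (j + 1)) ≤ (1 - α (N + j)) * (ε / 3 + P j * a N) + α (N + j) * (ε / 3) := by
        have := mul_le_mul_of_nonneg_left ih h3
        have hb' := mul_le_mul_of_nonneg_left h2 (le_of_lt (hα (N + j)))
        calc a (N + (j + 1)) = a ((N + j) + 1) := by ring_nf
          _ ≤ (1 - α (N + j)) * a (N + j) + α (N + j) * b (N + j) := h1
          _ ≤ (1 - α (N + j)) * (ε / 3 + P j * a N) + α (N + j) * (ε / 3) := by
              exact add_le_add this hb'
      have hαpos := hα (N + j)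
      rw [h4]
      nlinarith
  -- the product tends to 0
  have hPle : ∀ j, P j ≤ Real.exp (-(∑ i ∈ Finset.range j, α (N + i))) := by
    intro j
    induction j with
    | zero => simp [hP]
    | succ j ih =>
      show (∏ i ∈ Finset.range (j + 1), (1 - α (N + i)))
          ≤ Real.exp (-∑ i ∈ Finset.range (j + 1), α (N + i))
      rw [Finset.prod_range_succ, Finset.sum_range_succ, neg_add, Real.exp_add]
      have h1 : 1 - α (N + j) ≤ Real.exp (-(α (N + j))) := by
        linarith [Real.add_one_le_exp (-(α (N + j)))]
      have h3 : 0 ≤ 1 - α (N + j) := by linarith [hα1 (N + j)]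
      calc (∏ i ∈ Finset.range j, (1 - α (N + i))) * (1 - α (N + j))
          ≤ Real.exp (-∑ i ∈ Finset.range j, α (N + i)) * Real.exp (-(α (N + j))) := by
            apply mul_le_mul ih h1 h3 (Real.exp_nonneg _)
        _ = _ := rfl
  have hsumdiv : Tendsto (fun j => ∑ i ∈ Finset.range j, α (N + i)) atTop atTop := by
    have hsplit : ∀ j, ∑ i ∈ Finset.range j, α (N + i)
        = (∑ k ∈ Finset.range (N + j), α k) - ∑ k ∈ Finset.range N, α k := by
      intro j
      rw [Finset.sum_range_add]
      ring
    simp only [hsplit]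
    apply Tendsto.atTop_add _ tendsto_const_nhds
    exact hαsum.comp ((tendsto_add_atTop_nat N).congr (fun j => by omega) |>.mono_right le_rfl)
  have hPtend : Tendsto P atTop (nhds 0) := by
    have h1 : Tendsto (fun j => Real.exp (-(∑ i ∈ Finset.range j, α (N + i))))
        atTop (nhds 0) := Real.tendsto_exp_atBot.comp (tendsto_neg_atBot_iff.2 hsumdiv)
    exact squeeze_zero hP0 hPle h1
  have hPa : Tendsto (fun j => P j * a N) atTop (nhds 0) := by
    simpa using hPtend.mul_const (a N)
  obtain ⟨J, hJ⟩ := (Metric.tendsto_atTop.1 hPa (ε / 3) (by linarith)).imp (fun J h => h)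
  refine ⟨N + J, fun n hn => ?_⟩
  have hnN : N ≤ n := le_trans (Nat.le_add_right N J) hn
  have hform : n = N + (n - N) := by omega
  have hj : J ≤ n - N := by omega
  have h1 := hPkey (n - N)
  have h2 := hJ (n - N) hj
  rw [Real.dist_eq, sub_zero] at h2 ⊢
  rw [abs_of_nonneg (ha n)]
  have : P (n - N) * a N < ε / 3 := lt_of_abs_lt h2
  rw [← hform] at h1
  linarith

/-- A weak sequential cluster point of a sequence in `X` along which the dual gap vanishes
is a solution of the variational inequality. -/
lemma fbf_cluster_in_solutions (X : Set H) (hXcl : IsClosed X) (hXconv : Convex ℝ X)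
    (F : H → H) (L : ℝ) (hL : 0 < L)
    (hLip : ∀ x y : H, ‖F x - F y‖ ≤ L * ‖x - y‖)
    (hPM : ∀ x ∈ X, ∀ y ∈ X, 0 ≤ ⟪F x, y - x⟫ → 0 ≤ ⟪F y, y - x⟫)
    (hFww : ∀ (u : ℕ → H) (v : H),
      (∀ w : H, Tendsto (fun n => ⟪u n, w⟫) atTop (nhds ⟪v, w⟫)) →
      ∀ w : H, Tendsto (fun n => ⟪F (u n), w⟫) atTop (nhds ⟪F v, w⟫))
    (w : H) (ζ : ℕ → H) (hζX : ∀ j, ζ j ∈ X)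
    (hweak : ∀ v : H, Tendsto (fun j => ⟪ζ j, v⟫) atTop (nhds ⟪w, v⟫))
    (hliminf : ∀ y ∈ X, ∀ δ > 0, ∀ᶠ j in atTop, -δ ≤ ⟪F (ζ j), y - ζ j⟫) :
    w ∈ X ∧ ∀ y ∈ X, 0 ≤ ⟪F w, y - w⟫ := by
  have hwX : w ∈ X := fbf_mem_of_weak_limit X hXcl hXconv ζ hζX w hweak
  refine ⟨hwX, ?_⟩
  by_contra hnot
  push_neg at hnot
  obtain ⟨y₀, hy₀X, hy₀⟩ := hnot
  obtain ⟨c0, hc0def⟩ : ∃ c : ℝ, c = -⟪F w, y₀ - w⟫ := ⟨_, rfl⟩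
  have hc0 : 0 < c0 := by rw [hc0def]; linarith
  have hFw : ∀ v : H, Tendsto (fun j => ⟪F (ζ j), v⟫) atTop (nhds ⟪F w, v⟫) :=
    hFww ζ w hweak
  -- eventual bounds
  have E1 : ∀ᶠ j in atTop, ⟪F (ζ j), ζ j⟫ ≤ ⟪F (ζ j), y₀⟫ + c0 / 4 := by
    filter_upwards [hliminf y₀ hy₀X (c0 / 4) (by linarith)] with j hj
    rw [inner_sub_right] at hj; linarith
  have E2 : ∀ᶠ j in atTop, |⟪F (ζ j), y₀⟫ - ⟪F w, y₀⟫| ≤ c0 / 4 := by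
    have := (hFw y₀).sub_const ⟪F w, y₀⟫
    have h := Metric.tendsto_atTop.1 ((hFw y₀)) (c0 / 4) (by linarith)
    obtain ⟨N, hN⟩ := h
    exact eventually_atTop.2 ⟨N, fun j hj => by
      have := hN j hj; rw [Real.dist_eq] at this; linarith [this.le]⟩
  have E3 : ∀ᶠ j in atTop, |⟪F (ζ j), w⟫ - ⟪F w, w⟫| ≤ c0 / 4 := by
    obtain ⟨N, hN⟩ := Metric.tendsto_atTop.1 (hFw w) (c0 / 4) (by linarith)
    exact eventually_atTop.2 ⟨N, fun j hj => by
      have := hN j hj; rw [Real.dist_eq] at this; linarith [this.le]⟩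
  have E4 : ∀ᶠ j in atTop, |⟪F (ζ j), y₀ - w⟫| ≤ 2 * c0 := by
    obtain ⟨N, hN⟩ := Metric.tendsto_atTop.1 (hFw (y₀ - w)) c0 (by linarith)
    refine eventually_atTop.2 ⟨N, fun j hj => ?_⟩
    have := hN j hj; rw [Real.dist_eq] at this
    have h2 : |⟪F w, y₀ - w⟫| = c0 := by
      rw [hc0def, abs_of_nonpos (by linarith)]
    calc |⟪F (ζ j), y₀ - w⟫|
        = |(⟪F (ζ j), y₀ - w⟫ - ⟪F w, y₀ - w⟫) + ⟪F w, y₀ - w⟫| := by ring_nf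
      _ ≤ |⟪F (ζ j), y₀ - w⟫ - ⟪F w, y₀ - w⟫| + |⟪F w, y₀ - w⟫| := abs_add_le _ _
      _ ≤ c0 + c0 := by rw [h2]; exact add_le_add this.le (le_refl _)
      _ = 2 * c0 := by ring
  -- choose the perturbation parameter
  obtain ⟨t, ht0, ht1, ht8, htL⟩ : ∃ t : ℝ, 0 < t ∧ t ≤ 1 ∧ t * (2 * c0) ≤ c0 / 8 ∧
      t * (L * ‖y₀ - w‖ ^ 2) ≤ c0 / 2 := by
    refine ⟨min (16⁻¹ : ℝ) (c0 / (2 * (L * ‖y₀ - w‖ ^ 2 + 1))), lt_min (by norm_num)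
      (by positivity), (min_le_left _ _).trans (by norm_num), ?_, ?_⟩
    · have h16 : min (16⁻¹ : ℝ) (c0 / (2 * (L * ‖y₀ - w‖ ^ 2 + 1))) ≤ 16⁻¹ := min_le_left _ _
      calc min (16⁻¹ : ℝ) (c0 / (2 * (L * ‖y₀ - w‖ ^ 2 + 1))) * (2 * c0)
          ≤ 16⁻¹ * (2 * c0) := mul_le_mul_of_nonneg_right h16 (by linarith)
        _ ≤ c0 / 8 := by linarith
    · have h1 : min (16⁻¹ : ℝ) (c0 / (2 * (L * ‖y₀ - w‖ ^ 2 + 1)))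
          ≤ c0 / (2 * (L * ‖y₀ - w‖ ^ 2 + 1)) := min_le_right _ _
      have h3 : (0:ℝ) ≤ L * ‖y₀ - w‖ ^ 2 := by positivity
      calc min (16⁻¹ : ℝ) (c0 / (2 * (L * ‖y₀ - w‖ ^ 2 + 1))) * (L * ‖y₀ - w‖ ^ 2)
          ≤ (c0 / (2 * (L * ‖y₀ - w‖ ^ 2 + 1))) * (L * ‖y₀ - w‖ ^ 2) :=
            mul_le_mul_of_nonneg_right h1 h3
        _ ≤ c0 / 2 := by
            rw [div_mul_eq_mul_div, div_le_div_iff₀ (by positivity) (by norm_num)]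
            nlinarith
  obtain ⟨wt, hwtdef⟩ : ∃ wt : H, wt = w + t • (y₀ - w) := ⟨_, rfl⟩
  have hwtX : wt ∈ X := by
    have : wt = (1 - t) • w + t • y₀ := by
      rw [hwtdef]; module
    rw [this]
    exact hXconv hwX hy₀X (by linarith) (by linarith) (by ring)
  -- eventually the pseudomonotonicity premise holds at `wt`
  have E5 : ∀ᶠ j in atTop, 0 ≤ ⟪F (ζ j), wt - ζ j⟫ := by
    filter_upwards [E1, E2, E3, E4] with j h1 h2 h3 h4
    have hexp : ⟪F (ζ j), wt - ζ j⟫ = (⟪F (ζ j), w⟫ - ⟪F (ζ j), ζ j⟫) + t * ⟪F (ζ j), y₀ - w⟫ := by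
      rw [hwtdef]
      rw [show w + t • (y₀ - w) - ζ j = (w - ζ j) + t • (y₀ - w) by abel]
      rw [inner_add_right, real_inner_smul_right, inner_sub_right]
    rw [hexp]
    have hw1 : ⟪F (ζ j), w⟫ - ⟪F (ζ j), ζ j⟫ ≥ c0 / 4 := by
      have ha : ⟪F (ζ j), ζ j⟫ ≤ ⟪F w, y₀⟫ + c0 / 2 := by
        have := abs_le.1 h2
        linarith [this.2]
      have hb : ⟪F (ζ j), w⟫ ≥ ⟪F w, w⟫ - c0 / 4 := by
        have := abs_le.1 h3
        linarith [this.1]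
      have hc : ⟪F w, w⟫ - ⟪F w, y₀⟫ = c0 := by
        rw [hc0def, inner_sub_right]; ring
      linarith
    have hw2 : t * ⟪F (ζ j), y₀ - w⟫ ≥ -(c0 / 8) := by
      have habs : |t * ⟪F (ζ j), y₀ - w⟫| ≤ t * (2 * c0) := by
        rw [abs_mul, abs_of_pos ht0]
        exact mul_le_mul_of_nonneg_left h4 ht0.le
      have hlo : -(t * (2 * c0)) ≤ t * ⟪F (ζ j), y₀ - w⟫ := (abs_le.1 habs).1
      linarith
    linarith
  -- pseudomonotonicity and passing to the limit
  have E6 : ∀ᶠ j in atTop, 0 ≤ ⟪F wt, wt - ζ j⟫ := by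
    filter_upwards [E5] with j hj
    exact hPM (ζ j) (hζX j) wt hwtX hj
  have hlim : Tendsto (fun j => ⟪F wt, wt - ζ j⟫) atTop (nhds ⟪F wt, wt - w⟫) := by
    have h1 : Tendsto (fun j => ⟪ζ j, F wt⟫) atTop (nhds ⟪w, F wt⟫) := hweak (F wt)
    have h2 : ∀ j, ⟪F wt, wt - ζ j⟫ = ⟪F wt, wt⟫ - ⟪ζ j, F wt⟫ := by
      intro j; rw [inner_sub_right, real_inner_comm (ζ j) (F wt)]
    have h3 : ⟪F wt, wt - w⟫ = ⟪F wt, wt⟫ - ⟪w, F wt⟫ := by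
      rw [inner_sub_right, real_inner_comm w (F wt)]
    rw [h3]
    simp only [h2]
    exact (tendsto_const_nhds).sub h1
  have hkey : 0 ≤ ⟪F wt, wt - w⟫ := ge_of_tendsto hlim E6
  have hwtw : wt - w = t • (y₀ - w) := by rw [hwtdef]; abel
  have hkey2 : 0 ≤ ⟪F wt, y₀ - w⟫ := by
    rw [hwtw, real_inner_smul_right] at hkey
    nlinarith
  -- contradiction via Lipschitz continuity
  have hlip2 : ⟪F wt, y₀ - w⟫ ≤ ⟪F w, y₀ - w⟫ + L * t * ‖y₀ - w‖ ^ 2 := by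
    have h1 : ⟪F wt - F w, y₀ - w⟫ ≤ ‖F wt - F w‖ * ‖y₀ - w‖ := real_inner_le_norm _ _
    have h2 : ‖F wt - F w‖ ≤ L * (t * ‖y₀ - w‖) := by
      have := hLip wt w
      rw [show wt - w = t • (y₀ - w) from hwtw] at this
      rw [norm_smul, Real.norm_eq_abs, abs_of_pos ht0] at this
      exact this
    have h3 : ⟪F wt, y₀ - w⟫ = ⟪F w, y₀ - w⟫ + ⟪F wt - F w, y₀ - w⟫ := by
      rw [inner_sub_left]; ring
    have h4 : ‖F wt - F w‖ * ‖y₀ - w‖ ≤ L * (t * ‖y₀ - w‖) * ‖y₀ - w‖ :=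
      mul_le_mul_of_nonneg_right h2 (norm_nonneg _)
    rw [h3]
    nlinarith [norm_nonneg (y₀ - w)]
  have : ⟪F wt, y₀ - w⟫ ≤ -c0 + c0 / 2 := by
    have : L * t * ‖y₀ - w‖ ^ 2 = t * (L * ‖y₀ - w‖ ^ 2) := by ring
    rw [hc0def] at *
    linarith [htL, hlip2]
  linarith

end FBFAux

set_option maxHeartbeats 2000000 in
/-- Strong convergence of the FBF algorithm (constant step-size) to the
minimal-norm solution of `VI(X,F)`. -/
theorem fbf_strong_convergence
    {H : Type*} [NormedAddCommGroup H] [InnerProductSpace ℝ H] [CompleteSpace H]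
    (X : Set H) (hXne : X.Nonempty) (hXcl : IsClosed X) (hXconv : Convex ℝ X)
    (F : H → H) (L : ℝ) (hL : 0 < L)
    (hLip : ∀ x y : H, ‖F x - F y‖ ≤ L * ‖x - y‖)
    (hPM : ∀ x ∈ X, ∀ y ∈ X, 0 ≤ ⟪F x, y - x⟫ → 0 ≤ ⟪F y, y - x⟫)
    (hFww : ∀ (u : ℕ → H) (v : H),
      (∀ w : H, Tendsto (fun n => ⟪u n, w⟫) atTop (nhds ⟪v, w⟫)) →
      ∀ w : H, Tendsto (fun n => ⟪F (u n), w⟫) atTop (nhds ⟪F v, w⟫))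
    (Xstar : Set H)
    (hXstar : Xstar = {y | y ∈ X ∧ ∀ w ∈ X, 0 ≤ ⟪F y, w - y⟫})
    (hXstarNe : Xstar.Nonempty) (hXstarCl : IsClosed Xstar) (hXstarConv : Convex ℝ Xstar)
    (γ : ℝ) (hγ : γ ∈ Set.Ioo 0 (1 / L))
    (α β : ℕ → ℝ) (hα : ∀ k, α k ∈ Set.Ioo (0 : ℝ) 1) (hβ : ∀ k, β k ∈ Set.Ioo (0 : ℝ) 1)
    (hαβ : ∃ a : ℝ, 0 < a ∧ ∀ k, a ≤ β k ∧ β k < 1 - α k)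
    (hα0 : Tendsto α atTop (nhds 0))
    (hαsum : Tendsto (fun N => ∑ k ∈ Finset.range N, α k) atTop atTop)
    (x z r : ℕ → H) (hx0 : x 0 ∈ X)
    -- `z k = P_X (x k - γ F (x k))`, via the variational characterization of the projection
    (hz : ∀ k, z k ∈ X ∧ ∀ y ∈ X, 0 ≤ ⟪(x k - γ • F (x k)) - z k, z k - y⟫)
    (hr : ∀ k, r k = z k + γ • (F (x k) - F (z k)))
    (hxs : ∀ k, x (k + 1) = (1 - α k - β k) • x k + β k • r k)
 :
    ∃ p ∈ Xstar, (∀ q ∈ Xstar, ‖p‖ ≤ ‖q‖) ∧ Tendsto x atTop (nhds p) := by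
  obtain ⟨hγ0, hγ1⟩ := hγ
  have hγL : γ * L < 1 := (lt_div_iff₀ hL).1 hγ1
  obtain ⟨a0, ha0, haβ⟩ := hαβ
  -- the minimal norm solution
  obtain ⟨p, hpXstar, hpnorm⟩ :=
    exists_norm_eq_iInf_of_complete_convex hXstarNe hXstarCl.isComplete hXstarConv (0 : H)
  have hpchar : ∀ q ∈ Xstar, 0 ≤ ⟪p, q - p⟫ := by
    intro q hq
    have h := (norm_eq_iInf_iff_real_inner_le_zero hXstarConv hpXstar).1 hpnorm q hq
    rw [zero_sub, inner_neg_left] at h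
    linarith
  have hpmin : ∀ q ∈ Xstar, ‖p‖ ≤ ‖q‖ := by
    intro q hq
    have h1 : 0 ≤ ⟪p, q - p⟫ := hpchar q hq
    rw [inner_sub_right, real_inner_self_eq_norm_sq] at h1
    have h2 : ⟪p, q⟫ ≤ ‖p‖ * ‖q‖ := real_inner_le_norm _ _
    rcases eq_or_lt_of_le (norm_nonneg p) with h0 | h0
    · rw [← h0]; exact norm_nonneg q
    · nlinarith
  have hpX : p ∈ X := by rw [hXstar] at hpXstar; exact hpXstar.1
  -- basic algorithm facts
  have hzX : ∀ k, z k ∈ X := fun k => (hz k).1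
  have hproj : ∀ k, ∀ y ∈ X, 0 ≤ ⟪(x k - γ • F (x k)) - z k, z k - y⟫ := fun k => (hz k).2
  have hsol : ∀ q ∈ Xstar, ∀ v ∈ X, 0 ≤ ⟪F v, v - q⟫ := by
    intro q hq v hv
    rw [hXstar] at hq
    exact hPM q hq.1 v hv (hq.2 v hv)
  have hc : 0 < 1 - γ ^ 2 * L ^ 2 := by nlinarith [mul_pos hγ0 hL]
  -- Lemma 1: the FBF one-step estimate
  have lem1 : ∀ k, ∀ q ∈ Xstar,
      ‖r k - q‖ ^ 2 ≤ ‖x k - q‖ ^ 2 - (1 - γ ^ 2 * L ^ 2) * ‖x k - z k‖ ^ 2 := by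
    intro k q hq
    have hqX : q ∈ X := by rw [hXstar] at hq; exact hq.1
    have hFz : 0 ≤ ⟪F (z k), z k - q⟫ := hsol q hq (z k) (hzX k)
    have hprojq := hproj k q hqX
    have e1 : r k - q = (z k - q) + γ • (F (x k) - F (z k)) := by rw [hr k]; abel
    have e2 : x k - q = (x k - z k) + (z k - q) := by abel
    have n1 : ‖r k - q‖ ^ 2 = ‖z k - q‖ ^ 2 + 2 * (γ * ⟪F (x k) - F (z k), z k - q⟫)
        + γ ^ 2 * ‖F (x k) - F (z k)‖ ^ 2 := by
      rw [e1, norm_add_sq_real, real_inner_smul_right, norm_smul, Real.norm_eq_abs,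
        mul_pow, sq_abs, real_inner_comm]
    have n2 : ‖x k - q‖ ^ 2 = ‖x k - z k‖ ^ 2 + 2 * ⟪x k - z k, z k - q⟫ + ‖z k - q‖ ^ 2 := by
      rw [e2, norm_add_sq_real]
    have hprojq' : γ * ⟪F (x k), z k - q⟫ ≤ ⟪x k - z k, z k - q⟫ := by
      have e3 : (x k - γ • F (x k)) - z k = (x k - z k) - γ • F (x k) := by abel
      rw [e3, inner_sub_left, real_inner_smul_left] at hprojq
      linarith
    have hsplit : ⟪F (x k) - F (z k), z k - q⟫
        = ⟪F (x k), z k - q⟫ - ⟪F (z k), z k - q⟫ := by rw [inner_sub_left]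
    have hg2 : ‖F (x k) - F (z k)‖ ^ 2 ≤ L ^ 2 * ‖x k - z k‖ ^ 2 := by
      have h := hLip (x k) (z k)
      nlinarith [norm_nonneg (F (x k) - F (z k)), norm_nonneg (x k - z k)]
    have hg2' : γ ^ 2 * ‖F (x k) - F (z k)‖ ^ 2 ≤ γ ^ 2 * (L ^ 2 * ‖x k - z k‖ ^ 2) :=
      mul_le_mul_of_nonneg_left hg2 (sq_nonneg γ)
    have hFz' : 0 ≤ γ * ⟪F (z k), z k - q⟫ := mul_nonneg hγ0.le hFz
    rw [n1, n2, hsplit]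
    ring_nf
    nlinarith [hprojq', hg2', hFz']
  -- Corollary: Fejér property w.r.t. p
  have hrp : ∀ k, ‖r k - p‖ ≤ ‖x k - p‖ := by
    intro k
    have h1 := lem1 k p hpXstar
    have h2 : 0 ≤ (1 - γ ^ 2 * L ^ 2) * ‖x k - z k‖ ^ 2 :=
      mul_nonneg hc.le (sq_nonneg _)
    have h3 : ‖r k - p‖ ^ 2 ≤ ‖x k - p‖ ^ 2 := by linarith
    nlinarith [norm_nonneg (r k - p), norm_nonneg (x k - p)]
  -- boundedness
  obtain ⟨M₀, hM₀x0, hM₀p, hM₀0⟩ : ∃ M : ℝ, ‖x 0 - p‖ ≤ M ∧ ‖p‖ ≤ M ∧ 0 ≤ M :=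
    ⟨max ‖x 0 - p‖ ‖p‖, le_max_left _ _, le_max_right _ _,
      (norm_nonneg p).trans (le_max_right _ _)⟩
  have hxb : ∀ k, ‖x k - p‖ ≤ M₀ := by
    intro k
    induction k with
    | zero => exact hM₀x0
    | succ k ih =>
      obtain ⟨hb1, hb2⟩ := haβ k
      obtain ⟨hα1, hα2⟩ := hα k
      obtain ⟨hβ1, hβ2⟩ := hβ k
      have hid : x (k + 1) - p
          = (1 - α k - β k) • (x k - p) + β k • (r k - p) + (-(α k)) • p := by
        rw [hxs k]; module
      have hn : ‖x (k + 1) - p‖ ≤ (1 - α k - β k) * ‖x k - p‖ + β k * ‖r k - p‖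
          + α k * ‖p‖ := by
        rw [hid]
        refine (norm_add_le _ _).trans ?_
        have h1 : ‖(1 - α k - β k) • (x k - p) + β k • (r k - p)‖
            ≤ (1 - α k - β k) * ‖x k - p‖ + β k * ‖r k - p‖ := by
          refine (norm_add_le _ _).trans ?_
          rw [norm_smul, norm_smul, Real.norm_eq_abs, Real.norm_eq_abs,
            abs_of_nonneg (by linarith), abs_of_nonneg hβ1.le]
        have h2 : ‖(-(α k)) • p‖ = α k * ‖p‖ := by
          rw [norm_smul, Real.norm_eq_abs, abs_neg, abs_of_nonneg hα1.le]
        linarith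
      have hr' := hrp k
      calc ‖x (k + 1) - p‖ ≤ (1 - α k - β k) * ‖x k - p‖ + β k * ‖r k - p‖ + α k * ‖p‖ := hn
        _ ≤ (1 - α k - β k) * M₀ + β k * M₀ + α k * M₀ := by
            refine add_le_add (add_le_add ?_ ?_) ?_
            · exact mul_le_mul_of_nonneg_left ih (by linarith)
            · exact mul_le_mul_of_nonneg_left (hr'.trans ih) hβ1.le
            · exact mul_le_mul_of_nonneg_left hM₀p hα1.le
        _ = M₀ := by ring
  -- further bounds
  obtain ⟨Bx, hBxdef⟩ : ∃ B : ℝ, B = M₀ + ‖p‖ := ⟨_, rfl⟩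
  have hxnorm : ∀ k, ‖x k‖ ≤ Bx := by
    intro k
    rw [hBxdef]
    calc ‖x k‖ = ‖(x k - p) + p‖ := by rw [sub_add_cancel]
      _ ≤ ‖x k - p‖ + ‖p‖ := norm_add_le _ _
      _ ≤ M₀ + ‖p‖ := add_le_add (hxb k) le_rfl
  have hBx0 : 0 ≤ Bx := (norm_nonneg (x 0)).trans (hxnorm 0)
  obtain ⟨BF, hBFdef⟩ : ∃ B : ℝ, B = ‖F p‖ + L * M₀ := ⟨_, rfl⟩
  have hFxb : ∀ k, ‖F (x k)‖ ≤ BF := by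
    intro k
    rw [hBFdef]
    have h1 : ‖F (x k) - F p‖ ≤ L * ‖x k - p‖ := hLip _ _
    have h2 : ‖F (x k)‖ ≤ ‖F p‖ + ‖F (x k) - F p‖ := by
      calc ‖F (x k)‖ = ‖F p + (F (x k) - F p)‖ := by congr 1; abel
        _ ≤ ‖F p‖ + ‖F (x k) - F p‖ := norm_add_le _ _
    have h3 : L * ‖x k - p‖ ≤ L * M₀ := mul_le_mul_of_nonneg_left (hxb k) hL.le
    linarith
  obtain ⟨Mz, hMzdef⟩ : ∃ B : ℝ, B = M₀ + γ * BF := ⟨_, rfl⟩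
  have hzb : ∀ k, ‖z k - p‖ ≤ Mz := by
    intro k
    have h0 := hproj k p hpX
    have e1 : (x k - γ • F (x k)) - z k = (x k - γ • F (x k) - p) - (z k - p) := by abel
    rw [e1, inner_sub_left] at h0
    have h1 : ‖z k - p‖ ^ 2 ≤ ⟪x k - γ • F (x k) - p, z k - p⟫ := by
      rw [real_inner_self_eq_norm_sq] at h0; linarith
  
    have h2 : ⟪x k - γ • F (x k) - p, z k - p⟫ ≤ ‖x k - γ • F (x k) - p‖ * ‖z k - p‖ :=
      real_inner_le_norm _ _
    have h3 : ‖x k - γ • F (x k) - p‖ ≤ Mz := by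
      rw [hMzdef]
      have e2 : x k - γ • F (x k) - p = (x k - p) + (-γ) • F (x k) := by module
      rw [e2]
      refine (norm_add_le _ _).trans ?_
      rw [norm_smul, Real.norm_eq_abs, abs_neg, abs_of_nonneg hγ0.le]
      exact add_le_add (hxb k) (mul_le_mul_of_nonneg_left (hFxb k) hγ0.le)
    have hMz0 : 0 ≤ Mz := (norm_nonneg _).trans h3
    nlinarith [norm_nonneg (z k - p)]
  have hMz0 : 0 ≤ Mz := (norm_nonneg _).trans (hzb 0)
  have hznorm : ∀ k, ‖z k‖ ≤ Mz + ‖p‖ := by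
    intro k
    calc ‖z k‖ = ‖(z k - p) + p‖ := by rw [sub_add_cancel]
      _ ≤ ‖z k - p‖ + ‖p‖ := norm_add_le _ _
      _ ≤ Mz + ‖p‖ := add_le_add (hzb k) le_rfl
  -- the three scalar sequences
  obtain ⟨a, hadef⟩ : ∃ a : ℕ → ℝ, a = fun k => ‖x k - p‖ ^ 2 := ⟨_, rfl⟩
  obtain ⟨b, hbdef⟩ : ∃ b : ℕ → ℝ, b = fun k => 2 * ⟪-p, x (k + 1) - p⟫ := ⟨_, rfl⟩
  obtain ⟨s, hsdef⟩ : ∃ s : ℕ → ℝ, s = fun k => ‖x k - z k‖ := ⟨_, rfl⟩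
  have ha_eq : ∀ k, a k = ‖x k - p‖ ^ 2 := fun k => by rw [hadef]
  have hb_eq : ∀ k, b k = 2 * ⟪-p, x (k + 1) - p⟫ := fun k => by rw [hbdef]
  have hs_eq : ∀ k, s k = ‖x k - z k‖ := fun k => by rw [hsdef]
  have ha_nonneg : ∀ k, 0 ≤ a k := fun k => by rw [ha_eq]; positivity
  have hs_nonneg : ∀ k, 0 ≤ s k := fun k => by rw [hs_eq]; positivity
  obtain ⟨Bb, hBbdef⟩ : ∃ B : ℝ, B = 2 * ‖p‖ * M₀ := ⟨_, rfl⟩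
  have hbb : ∀ k, |b k| ≤ Bb := by
    intro k
    rw [hb_eq, hBbdef, abs_mul, abs_of_nonneg (by norm_num : (0:ℝ) ≤ 2)]
    have h1 : |⟪-p, x (k + 1) - p⟫| ≤ ‖(-p : H)‖ * ‖x (k + 1) - p‖ := abs_real_inner_le_norm _ _
    rw [norm_neg] at h1
    have h2 : ‖p‖ * ‖x (k + 1) - p‖ ≤ ‖p‖ * M₀ :=
      mul_le_mul_of_nonneg_left (hxb _) (norm_nonneg p)
    calc 2 * |⟪-p, x (k + 1) - p⟫| ≤ 2 * (‖p‖ * M₀) := by linarith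
      _ = 2 * ‖p‖ * M₀ := by ring
  have hbB : ∀ k, b k ≤ Bb := fun k => (le_abs_self _).trans (hbb k)
  have hBb0 : 0 ≤ Bb := (abs_nonneg _).trans (hbb 0)
  obtain ⟨κ, hκdef⟩ : ∃ κ : ℝ, κ = a0 ^ 2 * (1 - γ ^ 2 * L ^ 2) := ⟨_, rfl⟩
  have hκ0 : 0 < κ := by rw [hκdef]; positivity
  -- the main recursive inequality
  have MI : ∀ k, a (k + 1) ≤ (1 - α k) * a k + α k * b k - κ * s k ^ 2 := by
    intro k
    obtain ⟨hb1, hb2⟩ := haβ k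
    obtain ⟨hα1, hα2⟩ := hα k
    obtain ⟨hβ1, hβ2⟩ := hβ k
    have hc1 : (0:ℝ) ≤ 1 - α k - β k := by linarith
    have h1a : (0:ℝ) ≤ 1 - α k := by linarith
    have hv : x (k + 1) - p
        = ((1 - α k - β k) • (x k - p) + β k • (r k - p)) + (-(α k)) • p := by
      rw [hxs k]; module
    -- convexity bound on the first part
    have hnv : ‖(1 - α k - β k) • (x k - p) + β k • (r k - p)‖ ^ 2
        ≤ (1 - α k) * ((1 - α k - β k) * ‖x k - p‖ ^ 2 + β k * ‖r k - p‖ ^ 2) := by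
      rw [norm_add_sq_real, real_inner_smul_left, real_inner_smul_right, norm_smul, norm_smul,
        Real.norm_eq_abs, Real.norm_eq_abs, abs_of_nonneg hc1, abs_of_nonneg hβ1.le]
      have hip : ⟪x k - p, r k - p⟫ ≤ ‖x k - p‖ * ‖r k - p‖ := real_inner_le_norm _ _
      have hh1 : 0 ≤ (1 - α k - β k) * β k * (‖x k - p‖ - ‖r k - p‖) ^ 2 :=
        mul_nonneg (mul_nonneg hc1 hβ1.le) (sq_nonneg _)
      have hh2 : 0 ≤ (1 - α k - β k) * β k * (‖x k - p‖ * ‖r k - p‖ - ⟪x k - p, r k - p⟫) :=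
        mul_nonneg (mul_nonneg hc1 hβ1.le) (by linarith)
      linarith [hh1, hh2]
    -- the scalar-product expansion
    have hstep : a (k + 1)
        ≤ ‖(1 - α k - β k) • (x k - p) + β k • (r k - p)‖ ^ 2 + α k * b k := by
      rw [ha_eq, hv]
      have hexp : ‖((1 - α k - β k) • (x k - p) + β k • (r k - p)) + (-(α k)) • p‖ ^ 2
          = ‖(1 - α k - β k) • (x k - p) + β k • (r k - p)‖ ^ 2
            + 2 * ⟪(-(α k)) • p, (((1 - α k - β k) • (x k - p) + β k • (r k - p))
              + (-(α k)) • p)⟫ - ‖(-(α k)) • p‖ ^ 2 := by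
        rw [norm_add_sq_real, inner_add_right, real_inner_comm, real_inner_self_eq_norm_sq]
        ring
      rw [hexp]
      have hinner : ⟪(-(α k)) • p, (((1 - α k - β k) • (x k - p) + β k • (r k - p))
          + (-(α k)) • p)⟫ = α k * ⟪-p, x (k + 1) - p⟫ := by
        rw [← hv, show ((-(α k)) • p : H) = α k • (-p : H) by module, real_inner_smul_left]
      rw [hinner, hb_eq]
      have := sq_nonneg ‖(-(α k)) • p‖
      linarith
    -- assemble
    have hr2 : ‖r k - p‖ ^ 2 ≤ ‖x k - p‖ ^ 2 - (1 - γ ^ 2 * L ^ 2) * s k ^ 2 := by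
      rw [hs_eq]; exact lem1 k p hpXstar
    have hcs : 0 ≤ (1 - γ ^ 2 * L ^ 2) * s k ^ 2 := mul_nonneg hc.le (sq_nonneg _)
    have ha02 : a0 ^ 2 ≤ (1 - α k) * β k := by
      have h1 : a0 * a0 ≤ β k * a0 := mul_le_mul_of_nonneg_right hb1 ha0.le
      have h2 : β k * a0 ≤ β k * β k := mul_le_mul_of_nonneg_left hb1 hβ1.le
      have h3 : β k * β k ≤ (1 - α k) * β k :=
        mul_le_mul_of_nonneg_right (by linarith) hβ1.le
      rw [pow_two]
      linarith
    have hκs : κ * s k ^ 2 ≤ (1 - α k) * (β k * ((1 - γ ^ 2 * L ^ 2) * s k ^ 2)) := by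
      calc κ * s k ^ 2 = a0 ^ 2 * ((1 - γ ^ 2 * L ^ 2) * s k ^ 2) := by rw [hκdef]; ring
        _ ≤ ((1 - α k) * β k) * ((1 - γ ^ 2 * L ^ 2) * s k ^ 2) :=
            mul_le_mul_of_nonneg_right ha02 hcs
        _ = (1 - α k) * (β k * ((1 - γ ^ 2 * L ^ 2) * s k ^ 2)) := by ring
    have hxk2 : (0:ℝ) ≤ ‖x k - p‖ ^ 2 := sq_nonneg _
    have hmono : (1 - α k - β k) * ‖x k - p‖ ^ 2 + β k * ‖r k - p‖ ^ 2
        ≤ (1 - α k) * ‖x k - p‖ ^ 2 - β k * ((1 - γ ^ 2 * L ^ 2) * s k ^ 2) := by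
      have h := mul_le_mul_of_nonneg_left hr2 hβ1.le
      linarith [h]
    have h4 := mul_le_mul_of_nonneg_left hmono h1a
    have hA2 : (1 - α k) * ((1 - α k) * ‖x k - p‖ ^ 2) ≤ (1 - α k) * ‖x k - p‖ ^ 2 := by
      have h := mul_le_mul_of_nonneg_right (by linarith : 1 - α k ≤ 1)
        (mul_nonneg h1a hxk2)
      calc (1 - α k) * ((1 - α k) * ‖x k - p‖ ^ 2) ≤ 1 * ((1 - α k) * ‖x k - p‖ ^ 2) := h
        _ = (1 - α k) * ‖x k - p‖ ^ 2 := by ring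
    have h5 : (1 - α k) * ((1 - α k) * ‖x k - p‖ ^ 2 - β k * ((1 - γ ^ 2 * L ^ 2) * s k ^ 2))
        ≤ (1 - α k) * a k - κ * s k ^ 2 := by
      rw [ha_eq]
      have hdist : (1 - α k) * ((1 - α k) * ‖x k - p‖ ^ 2 - β k * ((1 - γ ^ 2 * L ^ 2) * s k ^ 2))
          = (1 - α k) * ((1 - α k) * ‖x k - p‖ ^ 2)
            - (1 - α k) * (β k * ((1 - γ ^ 2 * L ^ 2) * s k ^ 2)) := by ring
      rw [hdist]
      linarith
    linarith
  -- step-difference bound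
  have hγL1 : (0:ℝ) < 1 + γ * L := by nlinarith [mul_pos hγ0 hL]
  have hΔ : ∀ k, ‖x (k + 1) - x k‖ ≤ (1 + γ * L) * s k + α k * Bx := by
    intro k
    obtain ⟨hα1, hα2⟩ := hα k
    obtain ⟨hβ1, hβ2⟩ := hβ k
    have hid : x (k + 1) - x k = β k • (r k - x k) + (-(α k)) • x k := by
      rw [hxs k]; module
    have hrx : ‖r k - x k‖ ≤ (1 + γ * L) * s k := by
      have e : r k - x k = (z k - x k) + γ • (F (x k) - F (z k)) := by rw [hr k]; abel
      rw [e]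
      refine (norm_add_le _ _).trans ?_
      rw [norm_smul, Real.norm_eq_abs, abs_of_nonneg hγ0.le]
      have h1 : ‖z k - x k‖ = s k := by rw [hs_eq, norm_sub_rev]
      have h2 : ‖F (x k) - F (z k)‖ ≤ L * ‖x k - z k‖ := hLip _ _
      have h3 : γ * ‖F (x k) - F (z k)‖ ≤ γ * (L * s k) := by
        rw [hs_eq]
        exact mul_le_mul_of_nonneg_left h2 hγ0.le
      rw [h1]
      linarith [h3]
    calc ‖x (k + 1) - x k‖ ≤ ‖β k • (r k - x k)‖ + ‖(-(α k)) • x k‖ := by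
          rw [hid]; exact norm_add_le _ _
      _ = β k * ‖r k - x k‖ + α k * ‖x k‖ := by
          rw [norm_smul, norm_smul, Real.norm_eq_abs, Real.norm_eq_abs, abs_neg,
            abs_of_nonneg hβ1.le, abs_of_nonneg hα1.le]
      _ ≤ 1 * ((1 + γ * L) * s k) + α k * Bx := by
          refine add_le_add ?_ (mul_le_mul_of_nonneg_left (hxnorm k) hα1.le)
          exact mul_le_mul hβ2.le hrx (norm_nonneg _) zero_le_one
      _ = (1 + γ * L) * s k + α k * Bx := by ring
  -- Argument A: along subsequences with vanishing residual the limsup is nonpositive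
  have hA : ∀ ψ : ℕ → ℕ, Tendsto ψ atTop atTop →
      Tendsto (fun j => s (ψ j)) atTop (nhds 0) →
      ∀ ε > 0, ∀ᶠ j in atTop, ⟪-p, x (ψ j + 1) - p⟫ < ε := by
    intro ψ hψ hsψ ε hε
    by_contra hcon
    rw [Filter.not_eventually] at hcon
    have hfreq : ∃ᶠ j in atTop, ε ≤ ⟪-p, x (ψ j + 1) - p⟫ := hcon.mono fun j h => not_lt.1 h
    obtain ⟨θ, hθmono, hθge⟩ := Filter.extraction_of_frequently_atTop hfreq
    obtain ⟨φ, hφdef⟩ : ∃ φ : ℕ → ℕ, φ = fun j => ψ (θ j) := ⟨_, rfl⟩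
    have hφtop : Tendsto φ atTop atTop := by rw [hφdef]; exact hψ.comp hθmono.tendsto_atTop
    have hsφ : Tendsto (fun j => s (φ j)) atTop (nhds 0) := by
      rw [hφdef]; exact hsψ.comp hθmono.tendsto_atTop
    have hαφ : Tendsto (fun j => α (φ j)) atTop (nhds 0) := hα0.comp hφtop
    have hΔφ : Tendsto (fun j => ‖x (φ j + 1) - x (φ j)‖) atTop (nhds 0) := by
      have hb : Tendsto (fun j => (1 + γ * L) * s (φ j) + α (φ j) * Bx) atTop (nhds 0) := by
        have h := (hsφ.const_mul (1 + γ * L)).add (hαφ.mul_const Bx)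
        simpa using h
      exact squeeze_zero (fun j => norm_nonneg _) (fun j => hΔ (φ j)) hb
    obtain ⟨w, θ₂, hθ₂mono, hweak⟩ :=
      fbf_exists_weak_subseq (fun j => x (φ j)) Bx (fun j => hxnorm _)
    obtain ⟨φ₂, hφ₂def⟩ : ∃ φ₂ : ℕ → ℕ, φ₂ = fun j => φ (θ₂ j) := ⟨_, rfl⟩
    have hsφ₂ : Tendsto (fun j => s (φ₂ j)) atTop (nhds 0) := by
      rw [hφ₂def]; exact hsφ.comp hθ₂mono.tendsto_atTop
    have hweak₂ : ∀ v : H, Tendsto (fun j => ⟪x (φ₂ j), v⟫) atTop (nhds ⟪w, v⟫) := by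
      intro v; rw [hφ₂def]; exact hweak v
    have hΔφ₂ : Tendsto (fun j => ‖x (φ₂ j + 1) - x (φ₂ j)‖) atTop (nhds 0) := by
      rw [hφ₂def]; exact hΔφ.comp hθ₂mono.tendsto_atTop
    have hzdiff : Tendsto (fun j => ‖z (φ₂ j) - x (φ₂ j)‖) atTop (nhds 0) := by
      refine hsφ₂.congr fun j => ?_
      rw [hs_eq, norm_sub_rev]
    have hzweak : ∀ v : H, Tendsto (fun j => ⟪z (φ₂ j), v⟫) atTop (nhds ⟪w, v⟫) := by
      intro v
      have h2 : Tendsto (fun j => ⟪z (φ₂ j) - x (φ₂ j), v⟫) atTop (nhds 0) := by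
        refine squeeze_zero_norm (fun j => ?_) (by simpa using hzdiff.mul_const ‖v‖)
        rw [Real.norm_eq_abs]
        exact (abs_real_inner_le_norm _ _).trans
          (mul_le_mul_of_nonneg_right le_rfl (norm_nonneg _))
      have h3 := h2.add (hweak₂ v)
      rw [zero_add] at h3
      refine h3.congr fun j => ?_
      rw [inner_sub_left]; ring
    -- the liminf property along the subsequence
    have hliminf : ∀ y ∈ X, ∀ δ > 0, ∀ᶠ j in atTop, -δ ≤ ⟪F (z (φ₂ j)), y - z (φ₂ j)⟫ := by
      intro y hy δ hδ
      obtain ⟨Cy, hCydef⟩ : ∃ C : ℝ, C = (1 / γ + L) * (‖y‖ + (Mz + ‖p‖)) := ⟨_, rfl⟩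
      have hpt : ∀ k, -(Cy * s k) ≤ ⟪F (z k), y - z k⟫ := by
        intro k
        have h0 := hproj k y hy
        have e1 : (x k - γ • F (x k)) - z k = (x k - z k) - γ • F (x k) := by abel
        rw [e1, inner_sub_left, real_inner_smul_left] at h0
        have h1 : ⟪x k - z k, z k - y⟫ ≤ s k * ‖z k - y‖ := by
          refine (real_inner_le_norm _ _).trans ?_
          rw [hs_eq]
        have h2 : ⟪F (x k), z k - y⟫ ≤ 1 / γ * (s k * ‖z k - y‖) := by
          have h3 : γ * ⟪F (x k), z k - y⟫ ≤ s k * ‖z k - y‖ := by linarith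
          rw [show 1 / γ * (s k * ‖z k - y‖) = s k * ‖z k - y‖ / γ by ring,
            le_div_iff₀ hγ0]
          linarith [h3]
        have h4 : ⟪F (z k) - F (x k), z k - y⟫ ≤ L * s k * ‖z k - y‖ := by
          refine (real_inner_le_norm _ _).trans ?_
          have h5 : ‖F (z k) - F (x k)‖ ≤ L * s k := by
            rw [hs_eq, norm_sub_rev (x k)]
            exact hLip _ _
          exact mul_le_mul_of_nonneg_right h5 (norm_nonneg _)
        have e2 : ⟪F (z k), y - z k⟫
            = -(⟪F (x k), z k - y⟫ + ⟪F (z k) - F (x k), z k - y⟫) := by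
          rw [show y - z k = -(z k - y) by abel, inner_neg_right, inner_sub_left]
          ring
        have h6 : ‖z k - y‖ ≤ ‖y‖ + (Mz + ‖p‖) := by
          calc ‖z k - y‖ ≤ ‖z k‖ + ‖y‖ := norm_sub_le _ _
            _ ≤ (Mz + ‖p‖) + ‖y‖ := add_le_add (hznorm k) le_rfl
            _ = ‖y‖ + (Mz + ‖p‖) := by ring
        have hsk := hs_nonneg k
        have hpos : (0:ℝ) ≤ 1 / γ + L := by positivity
        have h7 : (1 / γ + L) * s k * ‖z k - y‖ ≤ (1 / γ + L) * s k * (‖y‖ + (Mz + ‖p‖)) :=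
          mul_le_mul_of_nonneg_left h6 (by positivity)
        rw [e2, hCydef]
        linarith [h2, h4, h7]
      obtain ⟨N, hN⟩ := Metric.tendsto_atTop.1 (by simpa using hsφ₂.const_mul Cy : Tendsto
        (fun j => Cy * s (φ₂ j)) atTop (nhds 0)) δ hδ
      refine eventually_atTop.2 ⟨N, fun j hj => ?_⟩
      have h8 := hN j hj
      rw [Real.dist_eq, sub_zero] at h8
      have h9 : Cy * s (φ₂ j) ≤ δ := (le_abs_self _).trans h8.le
      exact le_trans (by linarith) (hpt (φ₂ j))
    -- the weak limit is a solution
    have hcl := fbf_cluster_in_solutions X hXcl hXconv F L hL hLip hPM hFww w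
      (fun j => z (φ₂ j)) (fun j => hzX _) hzweak hliminf
    have hwXstar : w ∈ Xstar := by rw [hXstar]; exact ⟨hcl.1, hcl.2⟩
    have hwle : ⟪-p, w - p⟫ ≤ 0 := by
      have h := hpchar w hwXstar
      rw [inner_neg_left]
      linarith
    have hlim : Tendsto (fun j => ⟪-p, x (φ₂ j) - p⟫) atTop (nhds ⟪-p, w - p⟫) := by
      have h1 := (hweak₂ (-p)).add (tendsto_const_nhds (x := ⟪p, (p:H)⟫))
      have heq : ∀ v : H, ⟪-p, v - p⟫ = ⟪v, -p⟫ + ⟪p, p⟫ := by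
        intro v
        rw [inner_sub_right, inner_neg_left, inner_neg_left, inner_neg_right,
          real_inner_comm v p]
        ring
      rw [← heq w] at h1
      exact h1.congr fun j => (heq (x (φ₂ j))).symm
    have hges : ∀ j, ε ≤ ⟪-p, x (φ₂ j) - p⟫ + ‖p‖ * ‖x (φ₂ j + 1) - x (φ₂ j)‖ := by
      intro j
      have h1 : ε ≤ ⟪-p, x (φ₂ j + 1) - p⟫ := by
        have h := hθge (θ₂ j)
        rw [hφ₂def, hφdef]
        exact h
      have h2 : ⟪-p, x (φ₂ j + 1) - p⟫
          = ⟪-p, x (φ₂ j) - p⟫ + ⟪-p, x (φ₂ j + 1) - x (φ₂ j)⟫ := by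
        rw [← inner_add_right]
        congr 1
        abel
      have h3 : ⟪-p, x (φ₂ j + 1) - x (φ₂ j)⟫ ≤ ‖p‖ * ‖x (φ₂ j + 1) - x (φ₂ j)‖ := by
        refine (real_inner_le_norm _ _).trans ?_
        rw [norm_neg]
      linarith
    have hlim2 : Tendsto (fun j => ⟪-p, x (φ₂ j) - p⟫ + ‖p‖ * ‖x (φ₂ j + 1) - x (φ₂ j)‖)
        atTop (nhds (⟪-p, w - p⟫ + 0)) := by
      refine hlim.add ?_
      simpa using hΔφ₂.const_mul ‖p‖
    have hfin : ε ≤ ⟪-p, w - p⟫ + 0 := ge_of_tendsto hlim2 (Eventually.of_forall hges)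
    linarith
  -- reduce the goal to `a → 0`
  have hsqrt : ∀ u : ℕ → ℝ, (∀ k, 0 ≤ u k) → Tendsto (fun k => u k ^ 2) atTop (nhds 0) →
      Tendsto u atTop (nhds 0) := by
    intro u hu h2
    have h := (Real.continuous_sqrt.tendsto 0).comp h2
    rw [Real.sqrt_zero] at h
    exact h.congr fun k => Real.sqrt_sq (hu k)
  have hconv_of_a : Tendsto a atTop (nhds 0) → Tendsto x atTop (nhds p) := by
    intro h
    rw [tendsto_iff_dist_tendsto_zero]
    have h2 : Tendsto (fun k => ‖x k - p‖) atTop (nhds 0) := by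
      refine hsqrt (fun k => ‖x k - p‖) (fun k => norm_nonneg _) ?_
      refine h.congr fun k => ?_
      rw [ha_eq]
    refine h2.congr fun k => ?_
    rw [dist_eq_norm]
  refine ⟨p, hpXstar, hpmin, hconv_of_a ?_⟩
  by_cases hcase : ∃ N, ∀ k, N ≤ k → a (k + 1) ≤ a k
  · -- Case I : eventually nonincreasing
    obtain ⟨N, hN⟩ := hcase
    have hmono : Antitone fun j => a (N + j) := by
      refine antitone_nat_of_succ_le fun j => ?_
      exact hN (N + j) (Nat.le_add_right _ _)
    have hbdd : BddBelow (Set.range fun j => a (N + j)) :=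
      ⟨0, fun v ⟨j, hj⟩ => hj ▸ ha_nonneg _⟩
    have hℓ := tendsto_atTop_ciInf hmono hbdd
    obtain ⟨ℓ, hℓ⟩ : ∃ ℓ, Tendsto (fun j => a (N + j)) atTop (nhds ℓ) := ⟨_, hℓ⟩
    have haℓ : Tendsto a atTop (nhds ℓ) := by
      rw [← tendsto_add_atTop_iff_nat N]
      exact hℓ.congr fun j => by rw [Nat.add_comm]
    have hdiff : Tendsto (fun k => a k - a (k + 1)) atTop (nhds 0) := by
      have h2 : Tendsto (fun k => a (k + 1)) atTop (nhds ℓ) :=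
        (tendsto_add_atTop_iff_nat 1).2 haℓ
      simpa using haℓ.sub h2
    have hs2 : Tendsto (fun k => s k ^ 2) atTop (nhds 0) := by
      have hub : ∀ k, s k ^ 2 ≤ (a k - a (k + 1) + α k * Bb) / κ := by
        intro k
        have h1 := MI k
        have h2 : α k * b k ≤ α k * Bb := mul_le_mul_of_nonneg_left (hbB k) (hα k).1.le
        have h3 : α k * a k ≥ 0 := mul_nonneg (hα k).1.le (ha_nonneg k)
        rw [le_div_iff₀ hκ0]
        nlinarith [h1, h2, h3]
      have hlb : ∀ k, 0 ≤ s k ^ 2 := fun k => sq_nonneg _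
      have htend : Tendsto (fun k => (a k - a (k + 1) + α k * Bb) / κ) atTop (nhds 0) := by
        have h := (hdiff.add (hα0.mul_const Bb)).div_const κ
        simpa using h
      exact squeeze_zero hlb hub htend
    have hs0 : Tendsto s atTop (nhds 0) := hsqrt s hs_nonneg hs2
    have hbev : ∀ ε > 0, ∀ᶠ k in atTop, b k ≤ ε := by
      intro ε hε
      have h := hA id tendsto_id (by simpa using hs0) (ε / 2) (by linarith)
      filter_upwards [h] with k hk
      rw [hb_eq]
      have hk' : ⟪-p, x (k + 1) - p⟫ < ε / 2 := hk
      linarith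
    exact fbf_xu a b α ha_nonneg (fun k => (hα k).1) (fun k => (hα k).2.le)
      (fun k => by linarith [MI k, mul_nonneg hκ0.le (sq_nonneg (s k))]) hαsum hbev
  · -- Case II : Maingé's argument
    push_neg at hcase
    classical
    have hfreq : ∀ N, ∃ k, N ≤ k ∧ a k < a (k + 1) := by
      intro N
      obtain ⟨k, hk1, hk2⟩ := hcase N
      exact ⟨k, hk1, hk2⟩
    obtain ⟨τ, hτdef⟩ : ∃ τ : ℕ → ℕ, τ = fun n => Nat.findGreatest (fun k => a k < a (k + 1)) n :=
      ⟨_, rfl⟩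
    obtain ⟨k₀, -, hk₀P⟩ := hfreq 0
    have hτP : ∀ n, k₀ ≤ n → a (τ n) < a (τ n + 1) := by
      intro n hn
      rw [hτdef]
      exact Nat.findGreatest_spec (P := fun k => a k < a (k + 1)) (m := k₀) hn hk₀P
    have hτ_le : ∀ n, τ n ≤ n := by intro n; rw [hτdef]; exact Nat.findGreatest_le n
    have hτtop : Tendsto τ atTop atTop := by
      rw [tendsto_atTop_atTop]
      intro K
      obtain ⟨k, hkK, hkP⟩ := hfreq K
      refine ⟨k, fun n hn => ?_⟩
      have : k ≤ τ n := by rw [hτdef]; exact Nat.le_findGreatest hn hkP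
      omega
    have hnotP : ∀ n j, τ n < j → j ≤ n → ¬(a j < a (j + 1)) := by
      intro n j h1 h2 hP
      have : j ≤ τ n := by rw [hτdef]; exact Nat.le_findGreatest h2 hP
      omega
    have hchain : ∀ n, k₀ ≤ n → a n ≤ a (τ n + 1) := by
      intro n hn
      have haux : ∀ m, τ n + 1 ≤ m → m ≤ n → a m ≤ a (τ n + 1) := by
        intro m
        induction m with
        | zero => intro h1 _; omega
        | succ m ih =>
          intro h1 h2
          rcases Nat.lt_or_ge (τ n) m with hm | hm
          · have hnP : ¬(a m < a (m + 1)) := hnotP n m hm (by omega)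
            exact (not_lt.1 hnP).trans (ih (by omega) (by omega))
          · have : m = τ n := by omega
            rw [this]
      rcases eq_or_lt_of_le (hτ_le n) with he | hlt
      · have h := hτP n hn
        rw [he] at h
        rw [he]
        exact h.le
      · exact haux n (by omega) le_rfl
    have hPineq : ∀ k, a k < a (k + 1) →
        κ * s k ^ 2 ≤ α k * Bb ∧ a k ≤ b k := by
      intro k hPk
      have h1 := MI k
      obtain ⟨hα1, hα2⟩ := hα k
      have h2 : α k * b k ≤ α k * Bb := mul_le_mul_of_nonneg_left (hbB k) hα1.le
      have h3 : 0 ≤ α k * a k := mul_nonneg hα1.le (ha_nonneg k)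
      constructor
      · nlinarith [mul_nonneg hκ0.le (sq_nonneg (s k))]
      · have h4 : α k * a k < α k * b k := by
          nlinarith [mul_nonneg hκ0.le (sq_nonneg (s k))]
        exact (lt_of_mul_lt_mul_left h4 hα1.le).le
    -- s ∘ τ → 0
    have hsτ2 : Tendsto (fun n => s (τ n) ^ 2) atTop (nhds 0) := by
      have hub : ∀ᶠ n in atTop, s (τ n) ^ 2 ≤ α (τ n) * Bb / κ := by
        refine eventually_atTop.2 ⟨k₀, fun n hn => ?_⟩
        have h := (hPineq (τ n) (hτP n hn)).1
        rw [le_div_iff₀ hκ0]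
        linarith [h]
      have htend : Tendsto (fun n => α (τ n) * Bb / κ) atTop (nhds 0) := by
        have h := ((hα0.comp hτtop).mul_const Bb).div_const κ
        simpa using h
      have hlb : ∀ n, 0 ≤ s (τ n) ^ 2 := fun n => sq_nonneg _
      exact squeeze_zero' (Eventually.of_forall hlb) hub htend
    have hsτ : Tendsto (fun n => s (τ n)) atTop (nhds 0) :=
      hsqrt _ (fun n => hs_nonneg _) hsτ2
    -- b (τ n) eventually small
    have hbτ : ∀ ε > 0, ∀ᶠ n in atTop, b (τ n) < ε := by
      intro ε hε
      by_contra hcon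
      rw [Filter.not_eventually] at hcon
      have hfreq2 : ∃ᶠ n in atTop, ε ≤ b (τ n) := hcon.mono fun n h => not_lt.1 h
      obtain ⟨θ, hθmono, hθge⟩ := Filter.extraction_of_frequently_atTop hfreq2
      have h1 : Tendsto (fun j => τ (θ j)) atTop atTop := hτtop.comp hθmono.tendsto_atTop
      have h2 : Tendsto (fun j => s (τ (θ j))) atTop (nhds 0) :=
        hsτ.comp hθmono.tendsto_atTop
      have h3 := hA (fun j => τ (θ j)) h1 h2 (ε / 4) (by linarith)
      obtain ⟨j, hj⟩ := (h3.and (Eventually.of_forall hθge)).exists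
      have h4 : b (τ (θ j)) < ε := by
        rw [hb_eq]
        linarith [hj.1]
      linarith [hj.2]
    -- conclude
    rw [Metric.tendsto_atTop]
    intro ε hε
    have hev : ∀ᶠ n in atTop, b (τ n) < ε ∧ k₀ ≤ n :=
      (hbτ ε hε).and (eventually_ge_atTop k₀)
    obtain ⟨N, hN⟩ := eventually_atTop.1 hev
    refine ⟨N, fun n hn => ?_⟩
    obtain ⟨h1, h2⟩ := hN n hn
    have h3 : a n ≤ a (τ n + 1) := hchain n h2
    have h4 : a (τ n + 1) ≤ b (τ n) := by
      have h5 := MI (τ n)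
      have h6 := (hPineq (τ n) (hτP n h2)).2
      obtain ⟨hα1, hα2⟩ := hα (τ n)
      have h7 : (1 - α (τ n)) * a (τ n) ≤ (1 - α (τ n)) * b (τ n) :=
        mul_le_mul_of_nonneg_left h6 (by linarith)
      nlinarith [mul_nonneg hκ0.le (sq_nonneg (s (τ n)))]
    rw [Real.dist_eq, sub_zero, abs_of_nonneg (ha_nonneg n)]
    linarith
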